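/- The Jaccard distance d(A, B) = 1 − |A ∩ B| / |A ∪ B| satisfies the triangle inequality on finite subsets of a fixed finite set (with d(∅, ∅) defined as 0), and hence is a metric on the collection of such subsets. -/

import Mathlib

open scoped symmDiff

/-- The Jaccard distance of two finite sets, with `d(∅, ∅) = 0`. -/
def jaccardDist {α : Type*} [DecidableEq α] (A B : Finset α) : ℚ :=
  if A ∪ B = ∅ then 0 else 1 - ((A ∩ B).card : ℚ) / ((A ∪ B).card : ℚ)

lemma jaccardDist_eq {α : Type*} [DecidableEq α] (A B : Finset α) :
    jaccardDist A B = ((A ∆ B).card : ℚ) / ((A ∪ B).card : ℚ) := by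
  unfold jaccardDist
  split_ifs with h
  · have hA : A = ∅ := by
      rw [← Finset.subset_empty, ← h]; exact Finset.subset_union_left
    have hB : B = ∅ := by
      rw [← Finset.subset_empty, ← h]; exact Finset.subset_union_right
    simp [hA, hB]
  · have hu : (A ∪ B).card ≠ 0 := by
      simpa [Finset.card_eq_zero] using h
    have hs : (A ∆ B).card = (A ∪ B).card - (A ∩ B).card := by
      rw [symmDiff_eq_sup_sdiff_inf]
      exact Finset.card_sdiff_of_subset Finset.inter_subset_union
    have hle : (A ∩ B).card ≤ (A ∪ B).card :=
      Finset.card_le_card Finset.inter_subset_union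
    rw [hs]
    have : ((A ∪ B).card - (A ∩ B).card : ℚ) = (((A ∪ B).card - (A ∩ B).card : ℕ) : ℚ) := by
      push_cast [hle]; ring
    rw [← this]
    field_simp

lemma jaccardDist_nonneg {α : Type*} [DecidableEq α] (A B : Finset α) :
    0 ≤ jaccardDist A B := by
  rw [jaccardDist_eq]; positivity

/-- monotonicity helper: dividing by a possibly larger denominator. -/
lemma div_card_mono {α : Type*} [DecidableEq α] (X Y : Finset α) (n : ℚ)
    (hXY : X ⊆ Y) (hn : (Y.card : ℚ) ≤ n) : (X.card : ℚ) / n ≤ (X.card : ℚ) / (Y.card : ℚ) := by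
  rcases Nat.eq_zero_or_pos Y.card with h | h
  · have hY : Y = ∅ := Finset.card_eq_zero.mp h
    have hX : X = ∅ := Finset.subset_empty.mp (hY ▸ hXY)
    simp [hX]
  · have hY : (0 : ℚ) < Y.card := by exact_mod_cast h
    exact div_le_div_of_nonneg_left (by positivity) hY hn

/-- The Jaccard distance `d(A,B) = 1 − |A ∩ B|/|A ∪ B|` (with
`d(∅,∅) = 0`) satisfies the triangle inequality, is symmetric, and vanishes
exactly on equal sets; hence it is a metric on finite subsets. -/
theorem jaccardDist_is_metric {α : Type*} [DecidableEq α] :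
    (∀ A B C : Finset α, jaccardDist A C ≤ jaccardDist A B + jaccardDist B C) ∧
    (∀ A B : Finset α, jaccardDist A B = jaccardDist B A) ∧
    (∀ A B : Finset α, jaccardDist A B = 0 ↔ A = B) := by
  refine ⟨?_, ?_, ?_⟩
  · intro A B C
    rcases eq_or_ne (A ∪ C) ∅ with h | h
    · have : jaccardDist A C = 0 := by simp [jaccardDist, h]
      rw [this]
      exact add_nonneg (jaccardDist_nonneg A B) (jaccardDist_nonneg B C)
    · rw [jaccardDist_eq A C, jaccardDist_eq A B, jaccardDist_eq B C]
      set D : Finset α := B \ (A ∪ C) with hD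
      -- key counting inequality
      have hsub1 : D ⊆ A ∆ B := by
        intro x hx
        simp only [hD, Finset.mem_sdiff, Finset.mem_union] at hx
        rw [Finset.mem_symmDiff]; tauto
      have hsub2 : D ⊆ B ∆ C := by
        intro x hx
        simp only [hD, Finset.mem_sdiff, Finset.mem_union] at hx
        rw [Finset.mem_symmDiff]; tauto
      have hAC : A ∆ C ⊆ ((A ∆ B) \ D) ∪ ((B ∆ C) \ D) := by
        intro x hx
        rw [Finset.mem_symmDiff] at hx
        simp only [Finset.mem_union, Finset.mem_sdiff, Finset.mem_symmDiff, hD,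
          Finset.mem_sdiff, Finset.mem_union]
        by_cases hxB : x ∈ B <;> tauto
      have key : (A ∆ C).card + D.card + D.card ≤ (A ∆ B).card + (B ∆ C).card := by
        have h1 := Finset.card_le_card hAC
        have h2 := Finset.card_union_le ((A ∆ B) \ D) ((B ∆ C) \ D)
        have h3 := Finset.card_sdiff_add_card_eq_card hsub1
        have h4 := Finset.card_sdiff_add_card_eq_card hsub2
        omega
      -- A ∪ B ∪ C is the disjoint union of A ∪ C and D
      have hn : (A ∪ B ∪ C).card = (A ∪ C).card + D.card := by
        have hun : A ∪ B ∪ C = (A ∪ C) ∪ D := by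
          ext x
          simp only [Finset.mem_union, hD, Finset.mem_sdiff, Finset.mem_union]
          tauto
        have hdisj : Disjoint (A ∪ C) D := by
          rw [Finset.disjoint_right]
          intro x hx
          simp only [hD, Finset.mem_sdiff] at hx
          exact hx.2
        rw [hun, Finset.card_union_of_disjoint hdisj]
      have hsu : (A ∆ C).card ≤ (A ∪ C).card := by
        apply Finset.card_le_card
        rw [symmDiff_eq_sup_sdiff_inf]
        exact Finset.sdiff_subset
      have hu : 0 < (A ∪ C).card := by
        rwa [Finset.card_pos, Finset.nonempty_iff_ne_empty]
      -- rational arithmetic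
      have huq : (0 : ℚ) < ((A ∪ C).card : ℚ) := by exact_mod_cast hu
      have hd0 : (0 : ℚ) ≤ (D.card : ℚ) := by positivity
      have hsq : ((A ∆ C).card : ℚ) ≤ ((A ∪ C).card : ℚ) := by exact_mod_cast hsu
      have hnq : ((A ∪ B ∪ C).card : ℚ) = ((A ∪ C).card : ℚ) + (D.card : ℚ) := by
        exact_mod_cast hn
      have step1 : ((A ∆ C).card : ℚ) / ((A ∪ C).card : ℚ) ≤
          (((A ∆ C).card : ℚ) + 2 * (D.card : ℚ)) / (((A ∪ C).card : ℚ) + (D.card : ℚ)) := by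
        rw [div_le_div_iff₀ huq (by linarith)]
        nlinarith
      have step2 : (((A ∆ C).card : ℚ) + 2 * (D.card : ℚ)) / (((A ∪ C).card : ℚ) + (D.card : ℚ)) ≤
          ((A ∆ B).card : ℚ) / (((A ∪ C).card : ℚ) + (D.card : ℚ)) +
          ((B ∆ C).card : ℚ) / (((A ∪ C).card : ℚ) + (D.card : ℚ)) := by
        rw [← add_div]
        apply div_le_div_of_nonneg_right ?_ (by linarith)
        have := (Nat.cast_le (α := ℚ)).2 key
        push_cast at this
        linarith
      have step3 : ((A ∆ B).card : ℚ) / (((A ∪ C).card : ℚ) + (D.card : ℚ)) ≤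
          ((A ∆ B).card : ℚ) / ((A ∪ B).card : ℚ) := by
        rw [← hnq]
        apply div_card_mono
        · intro x hx
          rw [Finset.mem_symmDiff] at hx
          simp only [Finset.mem_union]; tauto
        · exact_mod_cast Finset.card_le_card
            (by intro x; simp only [Finset.mem_union]; tauto)
      have step4 : ((B ∆ C).card : ℚ) / (((A ∪ C).card : ℚ) + (D.card : ℚ)) ≤
          ((B ∆ C).card : ℚ) / ((B ∪ C).card : ℚ) := by
        rw [← hnq]
        apply div_card_mono
        · intro x hx
          rw [Finset.mem_symmDiff] at hx
          simp only [Finset.mem_union]; tauto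
        · exact_mod_cast Finset.card_le_card
            (by intro x; simp only [Finset.mem_union]; tauto)
      calc ((A ∆ C).card : ℚ) / ((A ∪ C).card : ℚ)
          ≤ (((A ∆ C).card : ℚ) + 2 * (D.card : ℚ)) / (((A ∪ C).card : ℚ) + (D.card : ℚ)) := step1
        _ ≤ ((A ∆ B).card : ℚ) / (((A ∪ C).card : ℚ) + (D.card : ℚ)) +
            ((B ∆ C).card : ℚ) / (((A ∪ C).card : ℚ) + (D.card : ℚ)) := step2
        _ ≤ ((A ∆ B).card : ℚ) / ((A ∪ B).card : ℚ) + ((B ∆ C).card : ℚ) / ((B ∪ C).card : ℚ) :=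
            add_le_add step3 step4
  · intro A B
    simp [jaccardDist, Finset.union_comm, Finset.inter_comm]
  · intro A B
    rw [jaccardDist_eq]
    constructor
    · intro h
      rcases eq_or_ne (A ∪ B) ∅ with hu | hu
      · have hA : A = ∅ := by
          rw [← Finset.subset_empty, ← hu]; exact Finset.subset_union_left
        have hB : B = ∅ := by
          rw [← Finset.subset_empty, ← hu]; exact Finset.subset_union_right
        rw [hA, hB]
      · have hc : ((A ∪ B).card : ℚ) ≠ 0 := by
          simpa [Finset.card_eq_zero] using hu
        rw [div_eq_zero_iff] at h
        rcases h with h | h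
        · have hcard : (A ∆ B).card = 0 := by exact_mod_cast h
          have hAB : A ∆ B = ∅ := Finset.card_eq_zero.mp hcard
          rw [← Finset.bot_eq_empty, symmDiff_eq_bot] at hAB
          exact hAB
        · exact absurd h hc
    · intro h
      subst h
      simp
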